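/- Fix n ≥ 2 and let G = Sol(n−1,d) = F_d/F_d^{(n−1)} with x_i the images of the generators X_i and φ: F_d → G the canonical projection. Then the map D induces a G-equivariant group isomorphism F_d^{(n−1)}/F_d^{(n)} ≅ Z_1(Sol(n−1,d)), and the sequence 1 → F_d^{(n−1)}/F_d^{(n)} → Sol(n,d) → Sol(n−1,d) → 1 is exact with abelian kernel; i.e. the free solvable group Sol(n,d) is an extension of Sol(n−1,d) by the first homology group of the Cayley graph of Sol(n−1,d). -/

import Mathlib

/-- `C1 G d` : edge chains of the right Cayley graph of `G` w.r.t. `d` distinguished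
elements; `Finsupp.single (g, i) 1` is the edge from `g` to `g * x i`. -/
abbrev C1 (G : Type*) (d : ℕ) : Type _ := (G × Fin d) →₀ ℤ

/-- `C0 G` : vertex chains, the free abelian group on `G`. -/
abbrev C0 (G : Type*) : Type _ := G →₀ ℤ

/-- The left action of `g : G` on edge chains, `g • δ_{(h,i)} = δ_{(g*h,i)}`. -/
noncomputable def shift {G : Type*} [Group G] (d : ℕ) (g : G) : C1 G d →+ C1 G d :=
  Finsupp.mapDomain.addMonoidHom fun p => (g * p.1, p.2)

/-- The boundary map `∂ : C1 → C0`, `∂ δ_{(g,i)} = δ_{g * x i} - δ_g`. -/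
noncomputable def bd {G : Type*} [Group G] (d : ℕ) (x : Fin d → G) : C1 G d →+ C0 G :=
  Finsupp.liftAddHom fun p =>
    zmultiplesHom (C0 G) (Finsupp.single (p.1 * x p.2) 1 - Finsupp.single p.1 1)

instance derivedSeriesNormal {G : Type*} [Group G] (n : ℕ) : (derivedSeries G n).Normal :=
  derivedSeries_normal G n

/-- `Sol n d`, the free solvable group of degree `n` with `d` generators. -/
abbrev Sol (n d : ℕ) : Type :=
  FreeGroup (Fin d) ⧸ derivedSeries (FreeGroup (Fin d)) n

section aux
variable {G : Type*} [Group G] {d : ℕ}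

lemma shift_single (g : G) (p : G × Fin d) (m : ℤ) :
    shift d g (Finsupp.single p m) = Finsupp.single (g * p.1, p.2) m := by
  simp [shift, Finsupp.mapDomain_single]

lemma shift_one_apply (γ : C1 G d) : shift d (1 : G) γ = γ := by
  have : shift d (1 : G) = AddMonoidHom.id (C1 G d) := by
    apply Finsupp.addHom_ext
    intro p m
    simp [shift_single]
  rw [this]; rfl

lemma shift_shift (g h : G) (γ : C1 G d) :
    shift d g (shift d h γ) = shift d (g * h) γ := by
  have : (shift d g).comp (shift d h) = shift d (g * h) := by
    apply Finsupp.addHom_ext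
    intro p m
    simp [shift_single, mul_assoc]
  calc shift d g (shift d h γ) = ((shift d g).comp (shift d h)) γ := rfl
    _ = _ := by rw [this]

lemma bd_single (x : Fin d → G) (p : G × Fin d) (m : ℤ) :
    bd d x (Finsupp.single p m)
      = m • (Finsupp.single (p.1 * x p.2) 1 - Finsupp.single p.1 1) := by
  simp [bd]

noncomputable def shift0 (g : G) : C0 G →+ C0 G :=
  Finsupp.mapDomain.addMonoidHom fun h => g * h

lemma shift0_single (g h : G) (m : ℤ) :
    shift0 g (Finsupp.single h m) = Finsupp.single (g * h) m := by
  simp [shift0, Finsupp.mapDomain_single]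

lemma bd_shift (x : Fin d → G) (g : G) (γ : C1 G d) :
    bd d x (shift d g γ) = shift0 g (bd d x γ) := by
  have : (bd d x).comp (shift d g) = (shift0 g).comp (bd d x) := by
    apply Finsupp.addHom_ext
    intro p m
    simp [shift_single, bd_single, shift0_single, mul_assoc, smul_sub]
  calc bd d x (shift d g γ) = ((bd d x).comp (shift d g)) γ := rfl
    _ = ((shift0 g).comp (bd d x)) γ := by rw [this]
    _ = _ := rfl

end aux

section Dlem
variable {d m : ℕ} (D : FreeGroup (Fin d) → C1 (Sol m d) d)
  (hD1 : ∀ i : Fin d, D (FreeGroup.of i) = Finsupp.single ((1 : Sol m d), i) 1)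
  (hDmul : ∀ u v : FreeGroup (Fin d),
    D (u * v) = D u +
      shift d (QuotientGroup.mk' (derivedSeries (FreeGroup (Fin d)) m) u) (D v))

include hDmul

lemma D_one : D 1 = 0 := by
  have h := hDmul 1 1
  rw [mul_one, map_one, shift_one_apply] at h
  exact (left_eq_add.mp h)

lemma D_inv (u : FreeGroup (Fin d)) :
    D u⁻¹ = - shift d ((QuotientGroup.mk' (derivedSeries (FreeGroup (Fin d)) m) u)⁻¹) (D u) := by
  have h := hDmul u⁻¹ u
  rw [inv_mul_cancel, D_one D hDmul, map_inv] at h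
  exact eq_neg_of_add_eq_zero_left h.symm

include hD1

lemma bd_D (u : FreeGroup (Fin d)) :
    bd d (fun i => ((QuotientGroup.mk (FreeGroup.of i)) : Sol m d)) (D u)
      = Finsupp.single ((QuotientGroup.mk' (derivedSeries (FreeGroup (Fin d)) m)) u) 1
        - Finsupp.single 1 1 := by
  induction u using FreeGroup.induction_on with
  | C1 => rw [D_one D hDmul, map_zero, map_one, sub_self]
  | of i =>
      simp [hD1, bd_single]
  | inv_of i _ =>
      have h : D (FreeGroup.of i)⁻¹
          = - Finsupp.single (((QuotientGroup.mk (FreeGroup.of i) : Sol m d))⁻¹, i) 1 := by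
        rw [D_inv D hDmul, hD1, shift_single]
        simp
      rw [h, map_neg, bd_single]
      simp
  | mul u v ihu ihv =>
      rw [hDmul, map_add, bd_shift, ihu, ihv, map_sub, shift0_single, shift0_single, map_mul]
      simp only [mul_one]
      abel

end Dlem
section Clauses
variable {d m : ℕ} (D : FreeGroup (Fin d) → C1 (Sol m d) d)
  (hD1 : ∀ i : Fin d, D (FreeGroup.of i) = Finsupp.single ((1 : Sol m d), i) 1)
  (hDmul : ∀ u v : FreeGroup (Fin d),
    D (u * v) = D u +
      shift d (QuotientGroup.mk' (derivedSeries (FreeGroup (Fin d)) m) u) (D v))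

lemma phi_eq_one {a : FreeGroup (Fin d)} (ha : a ∈ derivedSeries (FreeGroup (Fin d)) m) :
    QuotientGroup.mk' (derivedSeries (FreeGroup (Fin d)) m) a = 1 :=
  (QuotientGroup.eq_one_iff a).mpr ha

include hDmul

lemma D_mul_mem {a : FreeGroup (Fin d)} (ha : a ∈ derivedSeries (FreeGroup (Fin d)) m)
    (b : FreeGroup (Fin d)) : D (a * b) = D a + D b := by
  rw [hDmul, phi_eq_one ha, shift_one_apply]

lemma D_inv_mem {a : FreeGroup (Fin d)} (ha : a ∈ derivedSeries (FreeGroup (Fin d)) m) :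
    D a⁻¹ = - D a := by
  rw [D_inv D hDmul, phi_eq_one ha, inv_one, shift_one_apply]

lemma D_conj (w : FreeGroup (Fin d)) {a : FreeGroup (Fin d)}
    (ha : a ∈ derivedSeries (FreeGroup (Fin d)) m) :
    D (w * a * w⁻¹) =
      shift d (QuotientGroup.mk' (derivedSeries (FreeGroup (Fin d)) m) w) (D a) := by
  rw [hDmul (w * a) w⁻¹, hDmul w a, D_inv D hDmul, map_mul, phi_eq_one ha, mul_one,
    map_neg, shift_shift, mul_inv_cancel, shift_one_apply]
  abel

include hD1

lemma D_mem_ker {a : FreeGroup (Fin d)} (ha : a ∈ derivedSeries (FreeGroup (Fin d)) m) :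
    D a ∈ (bd d fun i => ((QuotientGroup.mk (FreeGroup.of i)) : Sol m d)).ker := by
  rw [AddMonoidHom.mem_ker, bd_D D hD1 hDmul, phi_eq_one ha, sub_self]

lemma D_surj :
    ∀ γ ∈ (bd d fun i => ((QuotientGroup.mk (FreeGroup.of i)) : Sol m d)).ker,
      ∃ a ∈ derivedSeries (FreeGroup (Fin d)) m, D a = γ := by
  classical
  set x : Fin d → Sol m d := fun i => ((QuotientGroup.mk (FreeGroup.of i)) : Sol m d) with hx
  set S : AddSubgroup (C1 (Sol m d) d) :=
    { carrier := {γ | ∃ a ∈ derivedSeries (FreeGroup (Fin d)) m, D a = γ}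
      add_mem' := by
        rintro γ δ ⟨a, ha, rfl⟩ ⟨b, hb, rfl⟩
        exact ⟨a * b, mul_mem ha hb, D_mul_mem D hDmul ha b⟩
      zero_mem' := ⟨1, one_mem _, D_one D hDmul⟩
      neg_mem' := by
        rintro γ ⟨a, ha, rfl⟩
        exact ⟨a⁻¹, inv_mem ha, D_inv_mem D hDmul ha⟩ } with hS
  set w : Sol m d → FreeGroup (Fin d) := fun g => Quotient.out g with hw
  have hwk : ∀ g : Sol m d,
      QuotientGroup.mk' (derivedSeries (FreeGroup (Fin d)) m) (w g) = g :=
    fun g => Quotient.out_eq' g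
  set ψ : C0 (Sol m d) →+ C1 (Sol m d) d :=
    Finsupp.liftAddHom fun g => zmultiplesHom _ (D (w g)) with hψ
  have hψs : ∀ g : Sol m d, ψ (Finsupp.single g 1) = D (w g) := by
    intro g; simp [hψ]
  have key : ∀ p : Sol m d × Fin d,
      Finsupp.single p 1 - ψ (bd d x (Finsupp.single p 1)) ∈ S := by
    intro p
    have hbd : bd d x (Finsupp.single p (1:ℤ))
        = Finsupp.single (p.1 * x p.2) 1 - Finsupp.single p.1 1 := by
      rw [bd_single, one_smul]
    set a : FreeGroup (Fin d) := w p.1 * FreeGroup.of p.2 * (w (p.1 * x p.2))⁻¹ with ha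
    have hofp : (QuotientGroup.mk' (derivedSeries (FreeGroup (Fin d)) m))
        (FreeGroup.of p.2) = x p.2 := rfl
    have hmem : a ∈ derivedSeries (FreeGroup (Fin d)) m := by
      have h1 : (QuotientGroup.mk' (derivedSeries (FreeGroup (Fin d)) m)) a = 1 := by
        rw [ha, map_mul, map_mul, map_inv, hwk, hwk, hofp, mul_inv_cancel]
      exact (QuotientGroup.eq_one_iff a).mp (by simpa using h1)
    have hDa : D a = Finsupp.single p 1 - ψ (bd d x (Finsupp.single p 1)) := by
      rw [ha, hDmul, hDmul, hD1, D_inv D hDmul, map_mul, hwk, hofp, shift_single, map_neg,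
        hwk, shift_shift, mul_inv_cancel, shift_one_apply,
        hbd, map_sub, hψs, hψs]
      simp only [mul_one]
      abel
    exact ⟨a, hmem, hDa⟩
  have main : ∀ γ : C1 (Sol m d) d, γ - ψ (bd d x γ) ∈ S := by
    intro γ
    induction γ using Finsupp.induction with
    | zero => simp [zero_mem]
    | single_add p b f _ _ ih =>
        have h1 : (Finsupp.single p b + f) - ψ (bd d x (Finsupp.single p b + f))
            = (Finsupp.single p b - ψ (bd d x (Finsupp.single p b)))
              + (f - ψ (bd d x f)) := by
          rw [map_add, map_add]; abel
        have h2 : Finsupp.single p b - ψ (bd d x (Finsupp.single p b))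
            = b • (Finsupp.single p 1 - ψ (bd d x (Finsupp.single p 1))) := by
          rw [smul_sub, ← map_zsmul, ← map_zsmul, Finsupp.smul_single, smul_eq_mul, mul_one]
        rw [h1, h2]
        exact add_mem (zsmul_mem (key p) b) ih
  intro γ hγ
  have h0 : bd d x γ = 0 := hγ
  have := main γ
  rw [h0, map_zero, sub_zero] at this
  exact this

lemma D_zero_of_mem_succ {a : FreeGroup (Fin d)}
    (ha : a ∈ derivedSeries (FreeGroup (Fin d)) (m + 1)) :
    a ∈ derivedSeries (FreeGroup (Fin d)) m ∧ D a = 0 := by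
  rw [derivedSeries_succ, Subgroup.commutator_def] at ha
  refine Subgroup.closure_induction ?_ ?_ ?_ ?_ ha
  · rintro z ⟨g, hg, h, hh, rfl⟩
    constructor
    · exact mul_mem (mul_mem (mul_mem hg hh) (inv_mem hg)) (inv_mem hh)
    · rw [commutatorElement_def,
        D_mul_mem D hDmul (mul_mem (mul_mem hg hh) (inv_mem hg)) h⁻¹,
        D_mul_mem D hDmul (mul_mem hg hh) g⁻¹,
        D_mul_mem D hDmul hg h,
        D_inv_mem D hDmul hg, D_inv_mem D hDmul hh]
      abel
  · exact ⟨one_mem _, D_one D hDmul⟩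
  · rintro u v _ _ ⟨hu, hu0⟩ ⟨hv, hv0⟩
    exact ⟨mul_mem hu hv, by rw [D_mul_mem D hDmul hu v, hu0, hv0, add_zero]⟩
  · rintro u _ ⟨hu, hu0⟩
    exact ⟨inv_mem hu, by rw [D_inv_mem D hDmul hu, hu0, neg_zero]⟩

lemma mem_succ_of_D_zero {a : FreeGroup (Fin d)}
    (haN : a ∈ derivedSeries (FreeGroup (Fin d)) m) (ha0 : D a = 0) :
    a ∈ derivedSeries (FreeGroup (Fin d)) (m + 1) := by
  classical
  set x : Fin d → Sol m d := fun i => ((QuotientGroup.mk (FreeGroup.of i)) : Sol m d) with hx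
  set N : Subgroup (FreeGroup (Fin d)) := derivedSeries (FreeGroup (Fin d)) m with hN
  set w : Sol m d → FreeGroup (Fin d) := fun g => Quotient.out g with hw
  have hwk : ∀ g : Sol m d,
      QuotientGroup.mk' (derivedSeries (FreeGroup (Fin d)) m) (w g) = g :=
    fun g => Quotient.out_eq' g
  have memN : ∀ (u : FreeGroup (Fin d)) (b : FreeGroup (Fin d)),
      QuotientGroup.mk' (derivedSeries (FreeGroup (Fin d)) m) b = 1 → b ∈ N := by
    intro u b hb
    exact (QuotientGroup.eq_one_iff b).mp (by simpa using hb)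
  -- generic membership of the "loop" elements
  have mem' : ∀ (u : FreeGroup (Fin d)) (g : Sol m d),
      w g * u * (w (g * QuotientGroup.mk' (derivedSeries (FreeGroup (Fin d)) m) u))⁻¹ ∈ N := by
    intro u g
    refine memN u _ ?_
    rw [map_mul, map_mul, map_inv, hwk, hwk, mul_inv_cancel]
  set s : Sol m d × Fin d → FreeGroup (Fin d) :=
    fun p => w p.1 * FreeGroup.of p.2 * (w (p.1 * x p.2))⁻¹ with hs
  have hsmem : ∀ p : Sol m d × Fin d, s p ∈ N := by
    intro p
    have := mem' (FreeGroup.of p.2) p.1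
    simpa [hs] using this
  set μ : C1 (Sol m d) d →+ Additive (Abelianization ↥N) :=
    Finsupp.liftAddHom fun p =>
      zmultiplesHom _ (Additive.ofMul (Abelianization.of (⟨s p, hsmem p⟩ : ↥N))) with hμ
  have hμs : ∀ p : Sol m d × Fin d,
      μ (Finsupp.single p 1) = Additive.ofMul (Abelianization.of (⟨s p, hsmem p⟩ : ↥N)) := by
    intro p; simp [hμ]
  have key : ∀ v : FreeGroup (Fin d), ∀ (g : Sol m d) (b : ↥N),
      (b : FreeGroup (Fin d)) =
        w g * v * (w (g * QuotientGroup.mk' (derivedSeries (FreeGroup (Fin d)) m) v))⁻¹ →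
      Additive.ofMul (Abelianization.of b) = μ (shift d g (D v)) := by
    intro v
    induction v using FreeGroup.induction_on with
    | C1 =>
        intro g b hb
        have hb1 : b = 1 := by
          apply Subtype.ext
          rw [hb]
          simp
        rw [hb1, map_one, D_one D hDmul, map_zero, map_zero, ofMul_one]
    | of i =>
        intro g b hb
        have hb1 : b = ⟨s (g, i), hsmem (g, i)⟩ := by
          apply Subtype.ext
          rw [hb]
          rfl
        rw [hb1, hD1, shift_single, mul_one, hμs]
    | inv_of i _ =>
        intro g b hb
        have hDoi : D (FreeGroup.of i)⁻¹
            = - Finsupp.single (((x i : Sol m d))⁻¹, i) 1 := by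
          rw [D_inv D hDmul, hD1, shift_single]
          simp [hx]
        have harg : (g * (x i)⁻¹) * x i = g := inv_mul_cancel_right g (x i)
        have hofi : QuotientGroup.mk' (derivedSeries (FreeGroup (Fin d)) m)
            (FreeGroup.of i)⁻¹ = (x i)⁻¹ := by
          rw [map_inv]; rfl
        have hcoe : (((⟨s (g * (x i)⁻¹, i), hsmem _⟩ : ↥N)⁻¹ : ↥N) : FreeGroup (Fin d))
            = w g * (FreeGroup.of i)⁻¹ *
              (w (g * QuotientGroup.mk' (derivedSeries (FreeGroup (Fin d)) m)
                (FreeGroup.of i)⁻¹))⁻¹ := by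
          rw [hofi]
          rw [show (((⟨s (g * (x i)⁻¹, i), hsmem _⟩ : ↥N)⁻¹ : ↥N) : FreeGroup (Fin d))
              = (w (g * (x i)⁻¹) * FreeGroup.of i * (w (g * (x i)⁻¹ * x i))⁻¹)⁻¹ from rfl]
          rw [harg]
          group
        have hb1 : b = (⟨s (g * (x i)⁻¹, i), hsmem _⟩ : ↥N)⁻¹ := by
          apply Subtype.ext
          rw [hb, hcoe]
        rw [hb1, hDoi, map_neg, shift_single, map_neg, hμs]
        simp
    | mul u v ihu ihv =>
        intro g b hb
        have hbe : b = (⟨w g * u *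
              (w (g * QuotientGroup.mk' (derivedSeries (FreeGroup (Fin d)) m) u))⁻¹,
              mem' u g⟩ : ↥N) *
            ⟨w (g * QuotientGroup.mk' (derivedSeries (FreeGroup (Fin d)) m) u) * v *
              (w ((g * QuotientGroup.mk' (derivedSeries (FreeGroup (Fin d)) m) u) *
                QuotientGroup.mk' (derivedSeries (FreeGroup (Fin d)) m) v))⁻¹,
              mem' v _⟩ := by
          apply Subtype.ext
          rw [hb, Subgroup.coe_mul]
          show w g * (u * v) *
              (w (g * QuotientGroup.mk' (derivedSeries (FreeGroup (Fin d)) m) (u * v)))⁻¹ = _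
          rw [map_mul, ← mul_assoc g]
          group
        rw [hbe, map_mul, ofMul_mul, hDmul, map_add, map_add,
          ihu g _ rfl, ihv (g * QuotientGroup.mk' (derivedSeries (FreeGroup (Fin d)) m) u) _ rfl,
          shift_shift]
  -- apply key at g = 1
  have hw1 : w 1 ∈ N := memN 1 _ (hwk 1)
  have hb : ((⟨w 1, hw1⟩ : ↥N) * ⟨a, haN⟩ * (⟨w 1, hw1⟩ : ↥N)⁻¹ : ↥N) =
      (⟨w 1 * a * (w (1 * QuotientGroup.mk' (derivedSeries (FreeGroup (Fin d)) m) a))⁻¹,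
        mem' a 1⟩ : ↥N) := by
    apply Subtype.ext
    push_cast
    rw [phi_eq_one haN, mul_one]
  have h2 := key a 1 ⟨w 1 * a * (w (1 * QuotientGroup.mk' (derivedSeries (FreeGroup (Fin d)) m) a))⁻¹, mem' a 1⟩ rfl
  rw [← hb] at h2
  rw [shift_one_apply, ha0, map_zero] at h2
  have h3 : Abelianization.of ((⟨a, haN⟩ : ↥N)) = 1 := by
    have h4 : Abelianization.of ((⟨w 1, hw1⟩ : ↥N) * ⟨a, haN⟩ * (⟨w 1, hw1⟩ : ↥N)⁻¹) = 1 := by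
      have := congrArg Additive.toMul h2
      simpa using this
    rw [map_mul, map_mul, map_inv] at h4
    rw [mul_comm (Abelianization.of _ * _)] at h4
    rwa [← mul_assoc, inv_mul_cancel, one_mul] at h4
  have h5 : (⟨a, haN⟩ : ↥N) ∈ commutator ↥N := by
    rw [← QuotientGroup.eq_one_iff]
    exact h3
  have h6 : a ∈ Subgroup.map N.subtype (commutator ↥N) :=
    ⟨⟨a, haN⟩, h5, rfl⟩
  rw [commutator_def, Subgroup.map_commutator, ← MonoidHom.range_eq_map,
    N.range_subtype, ← derivedSeries_succ] at h6
  exact h6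

end Clauses

open scoped commutatorElement in
lemma extension_clause (d m : ℕ) :
    ∃ π : Sol (m + 1) d →* Sol m d,
      (∀ w : FreeGroup (Fin d), π (QuotientGroup.mk w) = QuotientGroup.mk w) ∧
      Function.Surjective π ∧
      π.ker = Subgroup.map (QuotientGroup.mk' (derivedSeries (FreeGroup (Fin d)) (m + 1)))
        (derivedSeries (FreeGroup (Fin d)) m) ∧
      (∀ a b, a ∈ π.ker → b ∈ π.ker → a * b = b * a) := by
  have hle : derivedSeries (FreeGroup (Fin d)) (m + 1) ≤ derivedSeries (FreeGroup (Fin d)) m := by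
    rw [derivedSeries_succ]
    refine Subgroup.commutator_le.mpr fun g hg h hh => ?_
    rw [commutatorElement_def]
    exact mul_mem (mul_mem (mul_mem hg hh) (inv_mem hg)) (inv_mem hh)
  set π : Sol (m + 1) d →* Sol m d :=
    QuotientGroup.map _ _ (MonoidHom.id _) (by simpa using hle) with hπ
  have hker : π.ker = Subgroup.map
      (QuotientGroup.mk' (derivedSeries (FreeGroup (Fin d)) (m + 1)))
      (derivedSeries (FreeGroup (Fin d)) m) := by
    ext z
    constructor
    · intro hz
      obtain ⟨v, rfl⟩ := QuotientGroup.mk'_surjective (derivedSeries (FreeGroup (Fin d)) (m+1)) z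
      rw [MonoidHom.mem_ker] at hz
      simp only [QuotientGroup.mk'_apply] at hz
      have h1 := QuotientGroup.map_mk (derivedSeries (FreeGroup (Fin d)) (m+1))
          (derivedSeries (FreeGroup (Fin d)) m) (MonoidHom.id _) (by simpa using hle) v
      rw [h1] at hz
      exact ⟨v, (QuotientGroup.eq_one_iff v).mp hz, rfl⟩
    · rintro ⟨v, hv, rfl⟩
      rw [MonoidHom.mem_ker]
      have : (QuotientGroup.mk' (derivedSeries (FreeGroup (Fin d)) (m+1))) v
          = QuotientGroup.mk v := rfl
      rw [this, hπ, QuotientGroup.map_mk]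
      exact (QuotientGroup.eq_one_iff v).mpr hv
  refine ⟨π, ?_, ?_, hker, ?_⟩
  · intro w
    exact QuotientGroup.map_mk _ _ _ _ w
  · intro y
    obtain ⟨v, rfl⟩ := QuotientGroup.mk'_surjective (derivedSeries (FreeGroup (Fin d)) m) y
    exact ⟨QuotientGroup.mk v, QuotientGroup.map_mk _ _ _ _ v⟩
  · intro a b ha hb
    rw [hker] at ha hb
    obtain ⟨u, hu, rfl⟩ := ha
    obtain ⟨v, hv, rfl⟩ := hb
    rw [← map_mul, ← map_mul]
    have h1 : (u * v)⁻¹ * (v * u) = ⁅v⁻¹, u⁻¹⁆ := by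
      rw [commutatorElement_def]
      group
    have h2 : (u * v)⁻¹ * (v * u) ∈ derivedSeries (FreeGroup (Fin d)) (m + 1) := by
      rw [h1, derivedSeries_succ]
      exact Subgroup.commutator_mem_commutator (inv_mem hv) (inv_mem hu)
    simp only [QuotientGroup.mk'_apply]
    exact (QuotientGroup.eq ).mpr h2


/-- For `n ≥ 2`, with `G = Sol(n-1,d)`, `φ : F_d → G` the canonical projection and
`x i` the images of the free generators: `D` induces a `G`-equivariant isomorphism
`F_d^{(n-1)}/F_d^{(n)} ≃ Z_1(Cal(Sol(n-1,d)))` (the conjunction of the first five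
clauses), and `1 → F_d^{(n-1)}/F_d^{(n)} → Sol(n,d) → Sol(n-1,d) → 1` is exact with
abelian kernel (the final clause); i.e. `Sol(n,d)` is an extension of `Sol(n-1,d)` by
the first homology group of its Cayley graph. -/
theorem free_solvable_extension {d n : ℕ} (hd : 1 ≤ d) (hn : 2 ≤ n)
    (D : FreeGroup (Fin d) → C1 (Sol (n - 1) d) d)
    (hD1 : ∀ i : Fin d,
      D (FreeGroup.of i) = Finsupp.single ((1 : Sol (n - 1) d), i) 1)
    (hDmul : ∀ u v : FreeGroup (Fin d),
      D (u * v) = D u +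
        shift d (QuotientGroup.mk' (derivedSeries (FreeGroup (Fin d)) (n - 1)) u) (D v)) :
    (∀ a ∈ derivedSeries (FreeGroup (Fin d)) (n - 1),
      D a ∈ (bd d fun i => ((QuotientGroup.mk (FreeGroup.of i)) : Sol (n - 1) d)).ker) ∧
    (∀ a b : FreeGroup (Fin d), a ∈ derivedSeries (FreeGroup (Fin d)) (n - 1) →
      b ∈ derivedSeries (FreeGroup (Fin d)) (n - 1) → D (a * b) = D a + D b) ∧
    (∀ γ : C1 (Sol (n - 1) d) d,
      γ ∈ (bd d fun i => ((QuotientGroup.mk (FreeGroup.of i)) : Sol (n - 1) d)).ker →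
      ∃ a ∈ derivedSeries (FreeGroup (Fin d)) (n - 1), D a = γ) ∧
    (∀ a ∈ derivedSeries (FreeGroup (Fin d)) (n - 1),
      (D a = 0 ↔ a ∈ derivedSeries (FreeGroup (Fin d)) n)) ∧
    (∀ (w : FreeGroup (Fin d)), ∀ a ∈ derivedSeries (FreeGroup (Fin d)) (n - 1),
      D (w * a * w⁻¹) =
        shift d (QuotientGroup.mk' (derivedSeries (FreeGroup (Fin d)) (n - 1)) w) (D a)) ∧
    (∃ π : Sol n d →* Sol (n - 1) d,
      (∀ w : FreeGroup (Fin d),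
        π (QuotientGroup.mk w) = QuotientGroup.mk w) ∧
      Function.Surjective π ∧
      π.ker = Subgroup.map (QuotientGroup.mk' (derivedSeries (FreeGroup (Fin d)) n))
        (derivedSeries (FreeGroup (Fin d)) (n - 1)) ∧
      (∀ a b, a ∈ π.ker → b ∈ π.ker → a * b = b * a)) := by
  obtain ⟨m, rfl⟩ : ∃ m, n = m + 1 := ⟨n - 1, by omega⟩
  refine ⟨fun a ha => D_mem_ker D hD1 hDmul ha,
    fun a b ha _ => D_mul_mem D hDmul ha b,
    fun γ hγ => D_surj D hD1 hDmul γ hγ,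
    fun a ha => ⟨fun h0 => mem_succ_of_D_zero D hD1 hDmul ha h0,
      fun hsucc => (D_zero_of_mem_succ D hD1 hDmul hsucc).2⟩,
    fun w a ha => D_conj D hDmul w ha,
    extension_clause d m⟩
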